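/- Let E and F be real Banach spaces with E ≠ {0}, and let T : E → F be a bounded linear operator which is Fredholm of index zero (finite-dimensional kernel and cokernel of equal dimensions). Consider the set C(T) of companions of T, i.e. finite-rank bounded linear operators K : E → F such that T + K is bijective. Then the relation on C(T) defined by K₁ ∼ K₂ iff det((T+K₂)⁻¹(T+K₁)) > 0 is an equivalence relation, and C(T) has exactly two equivalence classes under this relation. -/

import Mathlib

/-- The determinant of an admissible endomorphism `S` (one with `range (id − S)`
finite-dimensional): the determinant of the restriction of `S` to any finite-dimensional
subspace containing `range (id − S)`, here the minimal one. -/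
noncomputable def admDet {E : Type*} [AddCommGroup E] [Module ℝ E] (S : E →ₗ[ℝ] E) : ℝ :=
  LinearMap.det (S.restrict
    (p := LinearMap.range ((LinearMap.id : E →ₗ[ℝ] E) - S))
    (q := LinearMap.range ((LinearMap.id : E →ₗ[ℝ] E) - S))
    (fun x hx => by
      have h1 : ((LinearMap.id : E →ₗ[ℝ] E) - S) x ∈
          LinearMap.range ((LinearMap.id : E →ₗ[ℝ] E) - S) :=
        LinearMap.mem_range_self _ x
      have h2 : S x = x - ((LinearMap.id : E →ₗ[ℝ] E) - S) x := by
        simp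
      rw [h2]
      exact Submodule.sub_mem _ hx h1))

open Classical in
/-- Inverse of a bijective linear map (junk value `0` otherwise). -/
noncomputable def linInv {E F : Type*} [AddCommGroup E] [Module ℝ E] [AddCommGroup F] [Module ℝ F]
    (f : E →ₗ[ℝ] F) : F →ₗ[ℝ] E :=
  if h : Function.Bijective ⇑f then ((LinearEquiv.ofBijective f h).symm : F →ₗ[ℝ] E) else 0

section linInvLemmas
variable {E F : Type*} [AddCommGroup E] [Module ℝ E] [AddCommGroup F] [Module ℝ F]

lemma linInv_comp_self (f : E →ₗ[ℝ] F) (h : Function.Bijective ⇑f) :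
    linInv f ∘ₗ f = LinearMap.id := by
  ext x
  simp [linInv, dif_pos h, LinearEquiv.ofBijective_symm_apply_apply]

lemma self_comp_linInv (f : E →ₗ[ℝ] F) (h : Function.Bijective ⇑f) :
    f ∘ₗ linInv f = LinearMap.id := by
  ext x
  simp only [linInv, dif_pos h, LinearMap.comp_apply, LinearMap.coe_coe, LinearMap.id_apply]
  exact (LinearEquiv.ofBijective f h).apply_symm_apply x

lemma linInv_bijective (f : E →ₗ[ℝ] F) (h : Function.Bijective ⇑f) :
    Function.Bijective ⇑(linInv f) := by
  simp only [linInv, dif_pos h]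
  exact (LinearEquiv.ofBijective f h).symm.bijective

lemma linInv_comp_eq (f : E →ₗ[ℝ] F) (h : Function.Bijective ⇑f) (s : E →ₗ[ℝ] E)
    (g : E →ₗ[ℝ] F) (hs : f ∘ₗ s = g) : linInv f ∘ₗ g = s := by
  rw [← hs, ← LinearMap.comp_assoc, linInv_comp_self f h, LinearMap.id_comp]

end linInvLemmas

/-- Block-triangular determinant: if `g - id` maps into an invariant subspace `W` of a
finite-dimensional space, then `det g = det (g|W)`. -/
lemma det_restrict_of_sub_id_range_le {V : Type*} [AddCommGroup V] [Module ℝ V]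
    [FiniteDimensional ℝ V] (g : V →ₗ[ℝ] V) (W : Submodule ℝ V)
    (hrange : ∀ x, g x - x ∈ W) (hW : ∀ x ∈ W, g x ∈ W) :
    LinearMap.det g = LinearMap.det (g.restrict hW) := by
  obtain ⟨U, hU⟩ := Submodule.exists_isCompl W
  let e : (W × U) ≃ₗ[ℝ] V := Submodule.prodEquivOfIsCompl W U hU
  let bW := Module.finBasis ℝ W
  let bU := Module.finBasis ℝ U
  let b : Module.Basis _ ℝ V := (bW.prod bU).map e
  have hreprW : ∀ (w : W) i, b.repr (w : V) (Sum.inl i) = bW.repr w i := by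
    intro w i
    simp only [b, e, Module.Basis.map_repr, LinearEquiv.trans_apply,
      Submodule.prodEquivOfIsCompl_symm_apply_left W U hU w, Module.Basis.prod_repr_inl]
  have hreprW' : ∀ (w : W) i, b.repr (w : V) (Sum.inr i) = 0 := by
    intro w i
    simp only [b, e, Module.Basis.map_repr, LinearEquiv.trans_apply,
      Submodule.prodEquivOfIsCompl_symm_apply_left W U hU w, Module.Basis.prod_repr_inr]
    simp
  have hreprU : ∀ (u : U) i, b.repr (u : V) (Sum.inr i) = bU.repr u i := by
    intro u i
    simp only [b, e, Module.Basis.map_repr, LinearEquiv.trans_apply,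
      Submodule.prodEquivOfIsCompl_symm_apply_right W U hU u, Module.Basis.prod_repr_inr]
  have hb_inl : ∀ j, b (Sum.inl j) = (bW j : V) := by
    intro j
    simp only [b, Module.Basis.map_apply]
    have : (bW.prod bU) (Sum.inl j) = ((bW j : W), (0 : U)) := by
      apply (bW.prod bU).repr.injective
      ext i
      rcases i with i | i
      · simp [Module.Basis.prod_repr_inl, Module.Basis.repr_self]
      · simp [Module.Basis.prod_repr_inr, Module.Basis.repr_self]
    rw [this]
    simp [e]
  have hb_inr : ∀ j, b (Sum.inr j) = (bU j : V) := by
    intro j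
    simp only [b, Module.Basis.map_apply]
    have : (bW.prod bU) (Sum.inr j) = ((0 : W), (bU j : U)) := by
      apply (bW.prod bU).repr.injective
      ext i
      rcases i with i | i
      · simp [Module.Basis.prod_repr_inl, Module.Basis.repr_self]
      · simp [Module.Basis.prod_repr_inr, Module.Basis.repr_self]
    rw [this]
    simp [e]
  rw [← LinearMap.det_toMatrix b g, ← LinearMap.det_toMatrix bW (g.restrict hW)]
  have hM : (LinearMap.toMatrix b b g) =
      Matrix.fromBlocks (LinearMap.toMatrix bW bW (g.restrict hW))
        (Matrix.of fun i j => LinearMap.toMatrix b b g (Sum.inl i) (Sum.inr j)) 0 1 := by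
    ext i j
    rcases i with i | i <;> rcases j with j | j
    · simp only [LinearMap.toMatrix_apply, Matrix.fromBlocks_apply₁₁, hb_inl]
      have : g (bW j : V) = ((g.restrict hW) (bW j) : V) := (LinearMap.restrict_coe_apply g hW _).symm
      rw [this, hreprW]
    · rfl
    · simp only [LinearMap.toMatrix_apply, Matrix.fromBlocks_apply₂₁, hb_inl, Matrix.zero_apply]
      have : g (bW j : V) = ((⟨g (bW j), hW _ (bW j).2⟩ : W) : V) := rfl
      rw [this, hreprW']
    · simp only [LinearMap.toMatrix_apply, Matrix.fromBlocks_apply₂₂, hb_inr, Matrix.one_apply]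
      have hdec : g (bU j : V) = ((⟨g (bU j) - (bU j : V), hrange _⟩ : W) : V) + (bU j : V) := by
        simp
      rw [hdec, map_add, Finsupp.add_apply, hreprW', zero_add, hreprU, Module.Basis.repr_self,
        Finsupp.single_apply]
      simp [eq_comm]
  rw [hM, Matrix.det_fromBlocks_zero₂₁, Matrix.det_one, mul_one]

section admDetLemmas
variable {E : Type*} [AddCommGroup E] [Module ℝ E]

lemma admDet_maps (S : E →ₗ[ℝ] E) :
    ∀ x ∈ LinearMap.range ((LinearMap.id : E →ₗ[ℝ] E) - S),
      S x ∈ LinearMap.range ((LinearMap.id : E →ₗ[ℝ] E) - S) := fun x hx => by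
  have h2 : S x = x - ((LinearMap.id : E →ₗ[ℝ] E) - S) x := by simp
  rw [h2]
  exact Submodule.sub_mem _ hx (LinearMap.mem_range_self _ x)

lemma admDet_def (S : E →ₗ[ℝ] E) : admDet S = LinearMap.det (S.restrict (admDet_maps S)) := rfl

/-- `admDet` is the determinant of the restriction of `S` to ANY finite-dimensional invariant
subspace containing `range (id - S)`. -/
lemma admDet_eq_det_restrict (S : E →ₗ[ℝ] E) (V : Submodule ℝ E) [FiniteDimensional ℝ V]
    (hV : ∀ x, x - S x ∈ V) (hSV : ∀ x ∈ V, S x ∈ V) :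
    admDet S = LinearMap.det (S.restrict hSV) := by
  set W : Submodule ℝ E := LinearMap.range ((LinearMap.id : E →ₗ[ℝ] E) - S) with hWdef
  have hWV : W ≤ V := by
    rintro _ ⟨x, rfl⟩
    simpa using hV x
  haveI : FiniteDimensional ℝ W := Submodule.finiteDimensional_of_le hWV
  -- the copy of W inside V
  set W' : Submodule ℝ V := Submodule.comap V.subtype W with hW'def
  set g : V →ₗ[ℝ] V := S.restrict hSV with hgdef
  have hgrange : ∀ x : V, g x - x ∈ W' := by
    intro x
    simp only [hW'def, Submodule.mem_comap, Submodule.coe_subtype, AddSubgroupClass.coe_sub]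
    have hgx : (g x : E) = S x := LinearMap.restrict_coe_apply S hSV x
    rw [hgx]
    have h4 : S (x : E) - (x : E) = -(((LinearMap.id : E →ₗ[ℝ] E) - S) (x : E)) := by simp
    rw [h4]
    exact Submodule.neg_mem _ (LinearMap.mem_range_self _ _)
  have hgW' : ∀ x ∈ W', g x ∈ W' := by
    intro x hx
    have : g x = (g x - x) + x := by abel
    rw [this]
    exact Submodule.add_mem _ (hgrange x) hx
  have h1 : LinearMap.det g = LinearMap.det (g.restrict hgW') :=
    det_restrict_of_sub_id_range_le g W' hgrange hgW'
  rw [admDet_def, h1]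
  -- now identify det (S.restrict (admDet_maps S)) with det (g.restrict hgW') via the equiv W' ≃ W
  let eW : W' ≃ₗ[ℝ] W := Submodule.comapSubtypeEquivOfLe hWV
  have hconj : S.restrict (admDet_maps S) = (eW : W' →ₗ[ℝ] W) ∘ₗ (g.restrict hgW') ∘ₗ (eW.symm : W →ₗ[ℝ] W') := by
    apply LinearMap.ext
    intro w
    apply Subtype.ext
    simp only [LinearMap.comp_apply, LinearMap.coe_coe, LinearEquiv.coe_coe]
    have h2 : ∀ (z : W'), ((eW z : W) : E) = ((z : V) : E) := fun z =>
      Submodule.comapSubtypeEquivOfLe_apply_coe hWV z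
    have hL : ((S.restrict (admDet_maps S) w : W) : E) = S (w : E) :=
      LinearMap.restrict_coe_apply S (admDet_maps S) w
    rw [hL, h2]
    have h3 : (((g.restrict hgW') (eW.symm w) : V) : E) = S (((eW.symm w : V) : E)) := by
      rw [LinearMap.restrict_coe_apply]
      exact LinearMap.restrict_coe_apply S hSV _
    rw [h3]
    congr 1
  rw [hconj, LinearMap.det_conj]

lemma admDet_id : admDet (LinearMap.id : E →ₗ[ℝ] E) = 1 := by
  haveI : FiniteDimensional ℝ (⊥ : Submodule ℝ E) := inferInstance
  rw [admDet_eq_det_restrict (LinearMap.id : E →ₗ[ℝ] E) ⊥ (by simp) (by simp)]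
  have : (LinearMap.id : E →ₗ[ℝ] E).restrict (p := ⊥) (q := ⊥) (by simp) = LinearMap.id :=
    Subsingleton.elim _ _
  rw [this, LinearMap.det_id]

lemma admDet_mul (A B : E →ₗ[ℝ] E)
    (hA : FiniteDimensional ℝ (LinearMap.range ((LinearMap.id : E →ₗ[ℝ] E) - A)))
    (hB : FiniteDimensional ℝ (LinearMap.range ((LinearMap.id : E →ₗ[ℝ] E) - B))) :
    admDet (A ∘ₗ B) = admDet A * admDet B := by
  set V : Submodule ℝ E := LinearMap.range ((LinearMap.id : E →ₗ[ℝ] E) - A) ⊔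
      LinearMap.range ((LinearMap.id : E →ₗ[ℝ] E) - B) with hVdef
  haveI : FiniteDimensional ℝ V := Submodule.finiteDimensional_sup _ _
  have h1 : ∀ x, x - A x ∈ V := by
    intro x
    have : x - A x ∈ LinearMap.range ((LinearMap.id : E →ₗ[ℝ] E) - A) := ⟨x, by simp⟩
    exact Submodule.mem_sup_left this
  have h2 : ∀ x, x - B x ∈ V := by
    intro x
    have : x - B x ∈ LinearMap.range ((LinearMap.id : E →ₗ[ℝ] E) - B) := ⟨x, by simp⟩
    exact Submodule.mem_sup_right this
  have hAV : ∀ x ∈ V, A x ∈ V := by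
    intro x hx
    have : A x = x - (x - A x) := by abel
    rw [this]; exact Submodule.sub_mem _ hx (h1 x)
  have hBV : ∀ x ∈ V, B x ∈ V := by
    intro x hx
    have : B x = x - (x - B x) := by abel
    rw [this]; exact Submodule.sub_mem _ hx (h2 x)
  have hABV : ∀ x ∈ V, (A ∘ₗ B) x ∈ V := fun x hx => hAV _ (hBV x hx)
  have h3 : ∀ x, x - (A ∘ₗ B) x ∈ V := by
    intro x
    have : x - (A ∘ₗ B) x = (x - A x) + A (x - B x) := by
      simp only [LinearMap.comp_apply, map_sub]; abel
    rw [this]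
    exact Submodule.add_mem _ (h1 x) (hAV _ (h2 x))
  rw [admDet_eq_det_restrict A V h1 hAV, admDet_eq_det_restrict B V h2 hBV,
    admDet_eq_det_restrict (A ∘ₗ B) V h3 hABV]
  have : (A ∘ₗ B).restrict hABV = (A.restrict hAV) ∘ₗ (B.restrict hBV) := by
    ext x
    simp [LinearMap.restrict_coe_apply]
  rw [this, LinearMap.det_comp]

lemma admDet_ne_zero (S : E →ₗ[ℝ] E)
    (hfd : FiniteDimensional ℝ (LinearMap.range ((LinearMap.id : E →ₗ[ℝ] E) - S)))
    (hinj : Function.Injective ⇑S) : admDet S ≠ 0 := by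
  rw [admDet_def]
  set g := S.restrict (admDet_maps S) with hg
  have hginj : Function.Injective ⇑g := by
    intro x y hxy
    apply Subtype.ext
    apply hinj
    have hx := LinearMap.restrict_coe_apply S (admDet_maps S) x
    have hy := LinearMap.restrict_coe_apply S (admDet_maps S) y
    rw [← hx, ← hy, hxy]
  have hbij : Function.Bijective ⇑g :=
    ⟨hginj, (LinearMap.injective_iff_surjective).mp hginj⟩
  have := LinearEquiv.isUnit_det' (LinearEquiv.ofBijective g hbij)
  have heq : ((LinearEquiv.ofBijective g hbij : _ →ₗ[ℝ] _)) = g := rfl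
  rw [heq] at this
  exact this.ne_zero

end admDetLemmas

set_option maxHeartbeats 2000000 in
/-- For a Fredholm operator `T` of index zero between real Banach spaces, `E ≠ {0}`, the relation
`K₁ ∼ K₂ ↔ det((T+K₂)⁻¹(T+K₁)) > 0` on the set of companions of `T` is an equivalence relation
with exactly two equivalence classes. -/
theorem companions_two_equivalence_classes
    {E F : Type*} [NormedAddCommGroup E] [NormedSpace ℝ E] [CompleteSpace E] [Nontrivial E]
    [NormedAddCommGroup F] [NormedSpace ℝ F] [CompleteSpace F]
    (T : E →L[ℝ] F)
    (hker : FiniteDimensional ℝ (LinearMap.ker (T : E →ₗ[ℝ] F)))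
    (hcoker : FiniteDimensional ℝ (F ⧸ LinearMap.range (T : E →ₗ[ℝ] F)))
    (hind : Module.finrank ℝ (LinearMap.ker (T : E →ₗ[ℝ] F)) = Module.finrank ℝ (F ⧸ LinearMap.range (T : E →ₗ[ℝ] F))) :
    let Cset : Set (E →L[ℝ] F) :=
      {K | FiniteDimensional ℝ (LinearMap.range (K : E →ₗ[ℝ] F)) ∧ Function.Bijective ⇑(T + K)}
    let R : (E →L[ℝ] F) → (E →L[ℝ] F) → Prop := fun K₁ K₂ =>
      0 < admDet (linInv (T + K₂).toLinearMap ∘ₗ (T + K₁).toLinearMap)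
    (∀ K ∈ Cset, R K K) ∧
    (∀ K₁ ∈ Cset, ∀ K₂ ∈ Cset, R K₁ K₂ → R K₂ K₁) ∧
    (∀ K₁ ∈ Cset, ∀ K₂ ∈ Cset, ∀ K₃ ∈ Cset, R K₁ K₂ → R K₂ K₃ → R K₁ K₃) ∧
    (∃ K₁ ∈ Cset, ∃ K₂ ∈ Cset, ¬ R K₁ K₂ ∧ ∀ K ∈ Cset, R K K₁ ∨ R K K₂) := by
  intro Cset R
  classical
  -- bijectivity of the linear coercions
  have hbijL : ∀ K ∈ Cset, Function.Bijective ⇑((T + K).toLinearMap) := by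
    rintro K ⟨-, h⟩; exact h
  -- admissibility of the comparison endomorphisms
  have hadm : ∀ K ∈ Cset, ∀ K' ∈ Cset,
      FiniteDimensional ℝ (LinearMap.range ((LinearMap.id : E →ₗ[ℝ] E) -
        (linInv (T + K').toLinearMap ∘ₗ (T + K).toLinearMap))) := by
    intro K hK K' hK'
    have heq : (LinearMap.id : E →ₗ[ℝ] E) - (linInv (T + K').toLinearMap ∘ₗ (T + K).toLinearMap)
        = linInv (T + K').toLinearMap ∘ₗ ((T + K').toLinearMap - (T + K).toLinearMap) := by
      have h1 : linInv (T + K').toLinearMap ∘ₗ ((T + K').toLinearMap - (T + K).toLinearMap)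
          = linInv (T + K').toLinearMap ∘ₗ (T + K').toLinearMap -
            linInv (T + K').toLinearMap ∘ₗ (T + K).toLinearMap := by
        ext x; simp
      rw [h1, linInv_comp_self _ (hbijL K' hK')]
    rw [heq, LinearMap.range_comp]
    have hle : LinearMap.range ((T + K').toLinearMap - (T + K).toLinearMap) ≤
        LinearMap.range (K' : E →ₗ[ℝ] F) ⊔ LinearMap.range (K : E →ₗ[ℝ] F) := by
      rintro _ ⟨x, rfl⟩
      have : ((T + K').toLinearMap - (T + K).toLinearMap) x = K' x - K x := by
        simp
      rw [this]
      exact Submodule.sub_mem _ (Submodule.mem_sup_left (LinearMap.mem_range_self _ x))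
        (Submodule.mem_sup_right (LinearMap.mem_range_self _ x))
    haveI : FiniteDimensional ℝ (LinearMap.range (K' : E →ₗ[ℝ] F) ⊔ LinearMap.range (K : E →ₗ[ℝ] F) : Submodule ℝ F) := by
      haveI := hK.1; haveI := hK'.1
      exact Submodule.finiteDimensional_sup _ _
    haveI : FiniteDimensional ℝ (LinearMap.range ((T + K').toLinearMap - (T + K).toLinearMap)) :=
      Submodule.finiteDimensional_of_le hle
    -- image of a finite-dimensional submodule
    have : Submodule.map (linInv (T + K').toLinearMap)
        (LinearMap.range ((T + K').toLinearMap - (T + K).toLinearMap)) =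
        LinearMap.range ((linInv (T + K').toLinearMap) ∘ₗ
          (LinearMap.range ((T + K').toLinearMap - (T + K).toLinearMap)).subtype) := by
      rw [LinearMap.range_comp, Submodule.range_subtype]
    rw [this]
    exact LinearMap.finiteDimensional_range _
  -- bijectivity of comparison endomorphisms
  have hSbij : ∀ K ∈ Cset, ∀ K' ∈ Cset,
      Function.Bijective ⇑(linInv (T + K').toLinearMap ∘ₗ (T + K).toLinearMap) := by
    intro K hK K' hK'
    rw [LinearMap.coe_comp]
    exact (linInv_bijective _ (hbijL K' hK')).comp (hbijL K hK)
  -- reflexivity value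
  have hrefl : ∀ K ∈ Cset, admDet (linInv (T + K).toLinearMap ∘ₗ (T + K).toLinearMap) = 1 := by
    intro K hK
    rw [linInv_comp_self _ (hbijL K hK), admDet_id]
  -- chain rule
  have hchain : ∀ K ∈ Cset, ∀ K' ∈ Cset, ∀ K'' ∈ Cset,
      admDet (linInv (T + K'').toLinearMap ∘ₗ (T + K).toLinearMap) =
      admDet (linInv (T + K'').toLinearMap ∘ₗ (T + K').toLinearMap) *
      admDet (linInv (T + K').toLinearMap ∘ₗ (T + K).toLinearMap) := by
    intro K hK K' hK' K'' hK''
    have hcomp : (linInv (T + K'').toLinearMap ∘ₗ (T + K).toLinearMap) =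
        (linInv (T + K'').toLinearMap ∘ₗ (T + K').toLinearMap) ∘ₗ
        (linInv (T + K').toLinearMap ∘ₗ (T + K).toLinearMap) := by
      ext x
      simp only [LinearMap.comp_apply]
      congr 1
      exact (LinearMap.ext_iff.mp (self_comp_linInv _ (hbijL K' hK')) _).symm
    rw [hcomp, admDet_mul _ _ (hadm K' hK' K'' hK'') (hadm K hK K' hK')]
  refine ⟨?_, ?_, ?_, ?_⟩
  · intro K hK
    show 0 < admDet (linInv (T + K).toLinearMap ∘ₗ (T + K).toLinearMap)
    rw [hrefl K hK]; norm_num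
  · intro K₁ h₁ K₂ h₂ h12
    have hc := hchain K₁ h₁ K₂ h₂ K₁ h₁
    rw [hrefl K₁ h₁] at hc
    have h12' : 0 < admDet (linInv (T + K₂).toLinearMap ∘ₗ (T + K₁).toLinearMap) := h12
    show 0 < admDet (linInv (T + K₁).toLinearMap ∘ₗ (T + K₂).toLinearMap)
    nlinarith [hc, h12']
  · intro K₁ h₁ K₂ h₂ K₃ h₃ h12 h23
    have hc := hchain K₁ h₁ K₂ h₂ K₃ h₃
    have h12' : 0 < admDet (linInv (T + K₂).toLinearMap ∘ₗ (T + K₁).toLinearMap) := h12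
    have h23' : 0 < admDet (linInv (T + K₃).toLinearMap ∘ₗ (T + K₂).toLinearMap) := h23
    show 0 < admDet (linInv (T + K₃).toLinearMap ∘ₗ (T + K₁).toLinearMap)
    rw [hc]; exact mul_pos h23' h12'
  · -- existence of the two classes
    -- Step 1: construct a companion K₁ of T
    obtain ⟨π, hπ⟩ := Submodule.ClosedComplemented.of_finiteDimensional
      (LinearMap.ker (T : E →ₗ[ℝ] F) : Submodule ℝ E)
    obtain ⟨s, hs⟩ := Module.projective_lifting_property
      (Submodule.mkQ (LinearMap.range (T : E →ₗ[ℝ] F))) LinearMap.id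
      (Submodule.mkQ_surjective (LinearMap.range (T : E →ₗ[ℝ] F)))
    obtain ⟨B⟩ := FiniteDimensional.nonempty_linearEquiv_of_finrank_eq hind
    set sB : (LinearMap.ker (T : E →ₗ[ℝ] F) : Submodule ℝ E) →ₗ[ℝ] F :=
      s ∘ₗ (B : (LinearMap.ker (T : E →ₗ[ℝ] F) : Submodule ℝ E) →ₗ[ℝ] (F ⧸ LinearMap.range (T : E →ₗ[ℝ] F))) with hsBdef
    set K₁ : E →L[ℝ] F := (LinearMap.toContinuousLinearMap sB).comp π with hK₁def
    have hK₁x : ∀ x : E, K₁ x = s (B (π x)) := fun x => rfl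
    have hmkQs : ∀ y, Submodule.mkQ (LinearMap.range (T : E →ₗ[ℝ] F)) (s y) = y := by
      intro y
      have := LinearMap.ext_iff.mp hs y
      simpa using this
    have hmkQT : ∀ x : E, Submodule.mkQ (LinearMap.range (T : E →ₗ[ℝ] F)) (T x) = 0 := by
      intro x
      rw [Submodule.mkQ_apply]
      exact (Submodule.Quotient.mk_eq_zero _).mpr (LinearMap.mem_range_self _ x)
    have hker0 : ∀ x : E, (T + K₁) x = 0 → x = 0 := by
      intro x hx
      have h0 : T x + s (B (π x)) = 0 := by
        have : (T + K₁) x = T x + K₁ x := rfl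
        rw [this, hK₁x] at hx
        exact hx
      have hq : B (π x) = 0 := by
        have := congrArg (Submodule.mkQ (LinearMap.range (T : E →ₗ[ℝ] F))) h0
        rw [map_add, map_zero, hmkQT, hmkQs, zero_add] at this
        exact this
      have hπx : π x = 0 := by
        have := congrArg B.symm hq
        simpa using this
      have hTx : T x = 0 := by
        have : s (B (π x)) = 0 := by rw [hq, map_zero]
        rw [this, add_zero] at h0
        exact h0
      have hxker : x ∈ LinearMap.ker (T : E →ₗ[ℝ] F) := LinearMap.mem_ker.mpr hTx
      have h2 : π x = (⟨x, hxker⟩ : LinearMap.ker (T : E →ₗ[ℝ] F)) := hπ ⟨x, hxker⟩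
      rw [hπx] at h2
      have : ((⟨x, hxker⟩ : LinearMap.ker (T : E →ₗ[ℝ] F)) : E) = ((0 : LinearMap.ker (T : E →ₗ[ℝ] F)) : E) :=
        congrArg _ h2.symm
      simpa using this
    have hinj₁ : Function.Injective ⇑(T + K₁) := by
      intro a b hab
      have : (T + K₁) (a - b) = 0 := by rw [map_sub, hab, sub_self]
      exact sub_eq_zero.mp (hker0 _ this)
    have hsurj₁ : Function.Surjective ⇑(T + K₁) := by
      intro y
      have h1 : y - s (Submodule.mkQ (LinearMap.range (T : E →ₗ[ℝ] F)) y) ∈ LinearMap.range (T : E →ₗ[ℝ] F) := by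
        rw [← Submodule.Quotient.mk_eq_zero (LinearMap.range (T : E →ₗ[ℝ] F)), ← Submodule.mkQ_apply,
          map_sub, hmkQs, sub_self]
      obtain ⟨z, hz⟩ := h1
      rw [ContinuousLinearMap.coe_coe] at hz
      refine ⟨z - ↑(π z) + ↑(B.symm (Submodule.mkQ (LinearMap.range (T : E →ₗ[ℝ] F)) y)), ?_⟩
      have hTz' : T ((π z : E)) = 0 := (π z).2
      have hTB : T ((B.symm (Submodule.mkQ (LinearMap.range (T : E →ₗ[ℝ] F)) y) : E)) = 0 :=
        (B.symm (Submodule.mkQ (LinearMap.range (T : E →ₗ[ℝ] F)) y)).2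
      have hπcalc : π (z - ↑(π z) + ↑(B.symm (Submodule.mkQ (LinearMap.range (T : E →ₗ[ℝ] F)) y))) =
          B.symm (Submodule.mkQ (LinearMap.range (T : E →ₗ[ℝ] F)) y) := by
        rw [map_add, map_sub, hπ (π z), hπ (B.symm (Submodule.mkQ (LinearMap.range (T : E →ₗ[ℝ] F)) y)),
          sub_self, zero_add]
      have happ : (T + K₁) (z - ↑(π z) + ↑(B.symm (Submodule.mkQ (LinearMap.range (T : E →ₗ[ℝ] F)) y))) =
          T (z - ↑(π z) + ↑(B.symm (Submodule.mkQ (LinearMap.range (T : E →ₗ[ℝ] F)) y))) +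
          s (B (π (z - ↑(π z) + ↑(B.symm (Submodule.mkQ (LinearMap.range (T : E →ₗ[ℝ] F)) y))))) := by
        rw [ContinuousLinearMap.add_apply, hK₁x]
      rw [happ, hπcalc, B.apply_symm_apply, map_add, map_sub, hTz', hTB, sub_zero, add_zero, hz]
      abel
    have hfd₁ : FiniteDimensional ℝ (LinearMap.range (K₁ : E →ₗ[ℝ] F)) := by
      have hle : LinearMap.range (K₁ : E →ₗ[ℝ] F) ≤ LinearMap.range sB := by
        rintro _ ⟨x, rfl⟩
        exact ⟨π x, rfl⟩
      haveI := LinearMap.finiteDimensional_range sB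
      exact Submodule.finiteDimensional_of_le hle
    have hK₁C : K₁ ∈ Cset := ⟨hfd₁, hinj₁, hsurj₁⟩
    -- Step 2: the reflection ρ and the companion K₂
    obtain ⟨e, he⟩ := exists_ne (0 : E)
    obtain ⟨f, hfe⟩ := SeparatingDual.exists_eq_one (R := ℝ) he
    set ρ : E →L[ℝ] E := ContinuousLinearMap.id ℝ E - (2 : ℝ) • (f.smulRight e) with hρdef
    have hρ : ∀ x, ρ x = x - (2 * f x) • e := by
      intro x
      simp [hρdef, ContinuousLinearMap.smulRight_apply, smul_smul]
    have hρρ : Function.Involutive ⇑ρ := by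
      intro x
      rw [hρ, hρ, map_sub, map_smul, hfe, smul_eq_mul, mul_one]
      module
    set A : E →L[ℝ] F := T + K₁ with hAdef
    set K₂ : E →L[ℝ] F := K₁ - (2 : ℝ) • (A.comp (f.smulRight e)) with hK₂def
    have hTK₂ : T + K₂ = A.comp ρ := by
      ext x
      have h1 : (T + K₂) x = A x - (2 * f x) • A e := by
        simp [hK₂def, hAdef, ContinuousLinearMap.smulRight_apply, smul_smul]
        abel
      have h2 : (A.comp ρ) x = A x - (2 * f x) • A e := by
        rw [ContinuousLinearMap.comp_apply, hρ, map_sub, map_smul]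
      rw [h1, h2]
    have hbij₂ : Function.Bijective ⇑(T + K₂) := by
      rw [hTK₂]
      have : ⇑(A.comp ρ) = ⇑A ∘ ⇑ρ := rfl
      rw [this]
      exact Function.Bijective.comp ⟨hinj₁, hsurj₁⟩ hρρ.bijective
    have hfd₂ : FiniteDimensional ℝ (LinearMap.range (K₂ : E →ₗ[ℝ] F)) := by
      have hle : LinearMap.range (K₂ : E →ₗ[ℝ] F) ≤ LinearMap.range (K₁ : E →ₗ[ℝ] F) ⊔ (ℝ ∙ (A e)) := by
        rintro _ ⟨x, rfl⟩
        have hval : K₂ x = K₁ x + (-(2 * f x)) • A e := by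
          rw [hK₂def]
          simp only [ContinuousLinearMap.sub_apply, ContinuousLinearMap.smul_apply,
            ContinuousLinearMap.comp_apply, ContinuousLinearMap.smulRight_apply, map_smul]
          rw [smul_smul, neg_smul]
          abel
        rw [ContinuousLinearMap.coe_coe, hval]
        exact Submodule.add_mem _
          (Submodule.mem_sup_left (LinearMap.mem_range_self _ x))
          (Submodule.mem_sup_right (Submodule.smul_mem _ _ (Submodule.mem_span_singleton_self _)))
      haveI := hfd₁
      haveI : FiniteDimensional ℝ (LinearMap.range (K₁ : E →ₗ[ℝ] F) ⊔ (ℝ ∙ (A e)) : Submodule ℝ F) :=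
        Submodule.finiteDimensional_sup _ _
      exact Submodule.finiteDimensional_of_le hle
    have hK₂C : K₂ ∈ Cset := ⟨hfd₂, hbij₂⟩
    -- Step 3: the comparison of K₁ and K₂ is the reflection ρ, of determinant -1
    have hfact : (T + K₂).toLinearMap ∘ₗ ρ.toLinearMap = (T + K₁).toLinearMap := by
      rw [hTK₂]
      ext x
      simp only [LinearMap.comp_apply, ContinuousLinearMap.coe_coe,
        ContinuousLinearMap.comp_apply]
      rw [hρρ x, hAdef]
    have hSρ : linInv (T + K₂).toLinearMap ∘ₗ (T + K₁).toLinearMap = ρ.toLinearMap :=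
      linInv_comp_eq _ hbij₂ _ _ hfact
    have hdet_ρ : admDet (ρ.toLinearMap : E →ₗ[ℝ] E) = -1 := by
      have hVe : ∀ x : E, x - ρ.toLinearMap x ∈ (ℝ ∙ e) := by
        intro x
        have : x - ρ x = (2 * f x) • e := by rw [hρ]; abel
        rw [ContinuousLinearMap.coe_coe, this]
        exact Submodule.smul_mem _ _ (Submodule.mem_span_singleton_self _)
      have hρV : ∀ x ∈ (ℝ ∙ e), ρ.toLinearMap x ∈ (ℝ ∙ e) := by
        intro x hx
        have : ρ.toLinearMap x = x - (x - ρ.toLinearMap x) := by abel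
        rw [this]
        exact Submodule.sub_mem _ hx (hVe x)
      rw [admDet_eq_det_restrict _ (ℝ ∙ e) hVe hρV]
      have hrestr : ρ.toLinearMap.restrict hρV = -LinearMap.id := by
        apply LinearMap.ext
        rintro ⟨x, hx⟩
        apply Subtype.ext
        obtain ⟨c, rfl⟩ := Submodule.mem_span_singleton.mp hx
        have h1 : (((ρ.toLinearMap.restrict hρV) ⟨c • e, hx⟩ : (ℝ ∙ e)) : E) = ρ (c • e) :=
          LinearMap.restrict_coe_apply _ _ _
        rw [h1, hρ, map_smul, hfe, smul_eq_mul, mul_one]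
        simp only [LinearMap.neg_apply, LinearMap.id_apply, NegMemClass.coe_neg]
        module
      rw [hrestr]
      have : (-LinearMap.id : (ℝ ∙ e) →ₗ[ℝ] (ℝ ∙ e)) = (-1 : ℝ) • LinearMap.id :=
        (neg_one_smul ℝ (LinearMap.id : (ℝ ∙ e) →ₗ[ℝ] (ℝ ∙ e))).symm
      rw [this, LinearMap.det_smul, finrank_span_singleton he, LinearMap.det_id]
      norm_num
    have hd12 : admDet (linInv (T + K₂).toLinearMap ∘ₗ (T + K₁).toLinearMap) = -1 := by
      rw [hSρ, hdet_ρ]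
    refine ⟨K₁, hK₁C, K₂, hK₂C, ?_, ?_⟩
    · show ¬ (0 < admDet (linInv (T + K₂).toLinearMap ∘ₗ (T + K₁).toLinearMap))
      rw [hd12]
      norm_num
    · intro K hK
      have hc := hchain K hK K₁ hK₁C K₂ hK₂C
      rw [hd12] at hc
      have hne : admDet (linInv (T + K₁).toLinearMap ∘ₗ (T + K).toLinearMap) ≠ 0 := by
        refine admDet_ne_zero _ (hadm K hK K₁ hK₁C) ?_
        exact (hSbij K hK K₁ hK₁C).injective
      rcases hne.lt_or_gt with hneg | hpos
      · right
        show 0 < admDet (linInv (T + K₂).toLinearMap ∘ₗ (T + K).toLinearMap)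
        rw [hc]
        nlinarith
      · left
        exact hpos
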